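/- Let e be a finite set with positive weights γ, let g : [0, γ(e)] → ℝ≥0 be concave with g(0) = g(γ(e)) = 0, and let w(S) = g(γ(S)). Let Q = {γ(S) : ∅ ⊂ S ⊂ e} with distinct values b1 < ... < br. Then there exist nonnegative coefficients a1, ..., ar such that w(S) = Σ_{i=1}^r a_i · min{(γ(e) - b_i)·γ(S), b_i·γ(e \ S)} for every S ⊆ e. -/

import Mathlib

theorem stmt12 {V : Type*} [DecidableEq V] (e : Finset V) (γ : V → ℝ)
    (hγ : ∀ v ∈ e, 0 < γ v) (g : ℝ → ℝ)
    (hconc : ConcaveOn ℝ (Set.Icc 0 (∑ v ∈ e, γ v)) g)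
    (hnn : ∀ x ∈ Set.Icc 0 (∑ v ∈ e, γ v), 0 ≤ g x)
    (hg0 : g 0 = 0) (hgT : g (∑ v ∈ e, γ v) = 0) :
    let Q : Finset ℝ := ((e.powerset.filter fun S => S ≠ ∅ ∧ S ≠ e).image
      fun S => ∑ v ∈ S, γ v)
    ∃ b : Fin Q.card → ℝ, StrictMono b ∧ (∀ i, b i ∈ Q) ∧
      ∃ a : Fin Q.card → ℝ, (∀ i, 0 ≤ a i) ∧
        ∀ S ⊆ e, g (∑ v ∈ S, γ v) =
          ∑ i, a i * min (((∑ v ∈ e, γ v) - b i) * ∑ v ∈ S, γ v)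
            (b i * ∑ v ∈ e \ S, γ v) := by
  intro Q
  have hQdef : Q = ((e.powerset.filter fun S => S ≠ ∅ ∧ S ≠ e).image
      fun S => ∑ v ∈ S, γ v) := rfl
  set T := ∑ v ∈ e, γ v with hTdef
  have hQpos : ∀ x ∈ Q, 0 < x ∧ x < T := by
    intro x hx
    rw [hQdef, Finset.mem_image] at hx
    obtain ⟨S, hS, rfl⟩ := hx
    rw [Finset.mem_filter, Finset.mem_powerset] at hS
    obtain ⟨hSe, hSne, hSneq⟩ := hS
    have hsd : ∑ v ∈ e \ S, γ v = T - ∑ v ∈ S, γ v := Finset.sum_sdiff_eq_sub hSe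
    constructor
    · exact Finset.sum_pos (fun v hv => hγ v (hSe hv))
        (Finset.nonempty_iff_ne_empty.2 hSne)
    · have hsub : (e \ S).Nonempty := by
        rw [Finset.sdiff_nonempty]
        intro h
        exact hSneq (Finset.Subset.antisymm hSe h)
      have hpos : 0 < ∑ v ∈ e \ S, γ v :=
        Finset.sum_pos (fun v hv => hγ v (Finset.mem_sdiff.1 hv).1) hsub
      rw [hsd] at hpos
      linarith
  have hmemQ : ∀ S : Finset V, S ⊆ e → S ≠ ∅ → S ≠ e → (∑ v ∈ S, γ v) ∈ Q := by
    intro S hSe h1 h2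
    rw [hQdef, Finset.mem_image]
    exact ⟨S, by rw [Finset.mem_filter, Finset.mem_powerset]; exact ⟨hSe, h1, h2⟩, rfl⟩
  set r := Q.card with hrdef
  rcases Nat.eq_zero_or_pos r with hr0 | hrpos
  · -- trivial case : Q is empty
    refine ⟨fun _ => 0, ?_, ?_, fun _ => 0, fun i => le_refl _, ?_⟩
    · intro i j hij
      exact absurd i.2 (by omega)
    · intro i; exact absurd i.2 (by omega)
    · intro S hS
      have hz : g (∑ v ∈ S, γ v) = 0 := by
        by_cases h1 : S = ∅
        · subst h1; rw [Finset.sum_empty]; exact hg0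
        by_cases h2 : S = e
        · subst h2; rw [← hTdef]; exact hgT
        · have hm := hmemQ S hS h1 h2
          have : Q ≠ ∅ := Finset.ne_empty_of_mem hm
          exact absurd (Finset.card_eq_zero.1 (hrdef ▸ hr0)) this
      rw [hz]
      exact (Finset.sum_eq_zero fun i _ => absurd i.2 (by omega)).symm
  -- main case
  have hQne : Q.Nonempty := Finset.card_pos.1 (hrdef ▸ hrpos)
  have hT0 : 0 < T := by
    obtain ⟨x, hx⟩ := hQne
    exact lt_trans (hQpos x hx).1 (hQpos x hx).2
  set b : Fin r → ℝ := fun i => Q.orderEmbOfFin hrdef.symm i with hbdef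
  have hbmono : StrictMono b := fun i j h => (Q.orderEmbOfFin hrdef.symm).strictMono h
  have hbmem : ∀ i, b i ∈ Q := fun i => Q.orderEmbOfFin_mem hrdef.symm i
  set B : ℕ → ℝ := fun i => if h : 1 ≤ i ∧ i ≤ r then b ⟨i - 1, by omega⟩
    else if i = 0 then 0 else T with hBdef
  have hB0 : B 0 = 0 := by simp [hBdef]
  have hBtop : ∀ i, r < i → B i = T := by
    intro i hi
    simp only [hBdef]
    rw [dif_neg (by omega), if_neg (by omega)]
  have hBb : ∀ i : Fin r, B ((i : ℕ) + 1) = b i := by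
    intro i
    have h : 1 ≤ (i:ℕ) + 1 ∧ (i:ℕ) + 1 ≤ r := ⟨by omega, by have := i.isLt; omega⟩
    simp only [hBdef]
    rw [dif_pos h]
    exact congrArg b (Fin.ext (by simp))
  have hBmemQ : ∀ i, 1 ≤ i → i ≤ r → B i ∈ Q := by
    intro i h1 h2
    simp only [hBdef]
    rw [dif_pos ⟨h1, h2⟩]
    exact hbmem _
  have hBlt : ∀ i j, i < j → j ≤ r + 1 → B i < B j := by
    intro i j hij hjr
    rcases Nat.eq_zero_or_pos i with hi0 | hi1
    · subst hi0
      rw [hB0]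
      rcases le_or_gt j r with hj | hj
      · exact (hQpos _ (hBmemQ j (by omega) hj)).1
      · rw [hBtop j hj]; exact hT0
    · rcases le_or_gt j r with hj | hj
      · simp only [hBdef]
        rw [dif_pos ⟨hi1, by omega⟩, dif_pos ⟨by omega, hj⟩]
        exact hbmono (by simp only [Fin.mk_lt_mk]; omega)
      · rw [hBtop j hj]
        exact (hQpos _ (hBmemQ i hi1 (by omega))).2
  have hBle : ∀ i j, i ≤ j → j ≤ r + 1 → B i ≤ B j := by
    intro i j hij hjr
    rcases hij.lt_or_eq with h | h
    · exact (hBlt i j h hjr).le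
    · rw [h]
  have hBIcc : ∀ i, i ≤ r + 1 → B i ∈ Set.Icc 0 T := by
    intro i hi
    constructor
    · rw [← hB0]; exact hBle 0 i (Nat.zero_le _) hi
    · have h := hBtop (r+1) (by omega)
      rw [← h]; exact hBle i (r+1) hi (le_refl _)
  set G : ℕ → ℝ := fun i => g (B i) with hGdef
  have hG0 : G 0 = 0 := by simp only [hGdef, hB0]; exact hg0
  have hGtop : G (r + 1) = 0 := by
    simp only [hGdef, hBtop (r+1) (by omega)]; exact hgT
  set s : ℕ → ℝ := fun i => (G i - G (i - 1)) / (B i - B (i - 1)) with hsdef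
  have hkey : ∀ m, 1 ≤ m → m ≤ r + 1 → s m * (B m - B (m - 1)) = G m - G (m - 1) := by
    intro m h1 h2
    have hne : B m - B (m - 1) ≠ 0 := by
      have := hBlt (m-1) m (by omega) h2
      linarith
    simp only [hsdef]
    exact div_mul_cancel₀ _ hne
  have hslope : ∀ m, 1 ≤ m → m + 1 ≤ r + 1 → s (m + 1) ≤ s m := by
    intro m h1 h2
    have hx : B (m - 1) ∈ Set.Icc 0 T := hBIcc _ (by omega)
    have hz : B (m + 1) ∈ Set.Icc 0 T := hBIcc _ (by omega)
    have hxy : B (m - 1) < B m := hBlt _ _ (by omega) (by omega)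
    have hyz : B m < B (m + 1) := hBlt _ _ (by omega) (by omega)
    have hsl := hconc.slope_anti_adjacent hx hz hxy hyz
    simp only [hsdef, hGdef]
    have e1 : m + 1 - 1 = m := by omega
    rw [e1]
    exact hsl
  set a : Fin r → ℝ := fun i => (s ((i:ℕ) + 1) - s ((i:ℕ) + 2)) / T with hadef
  have ha : ∀ i, 0 ≤ a i := by
    intro i
    have hs := hslope ((i:ℕ) + 1) (by omega) (by have := i.isLt; omega)
    simp only [hadef]
    have e2 : (i:ℕ) + 1 + 1 = (i:ℕ) + 2 := by omega
    rw [e2] at hs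
    exact div_nonneg (by linarith) hT0.le
  have L2 : ∀ m, 1 ≤ m → m ≤ r + 1 →
      ∑ i ∈ Finset.Ico 1 m, (s i - s (i + 1)) * B i = G (m - 1) - s m * B (m - 1) := by
    intro m hm1
    induction m, hm1 using Nat.le_induction with
    | base => intro _; simp [hB0, hG0]
    | succ m hm ih =>
      intro hmr
      rw [Finset.sum_Ico_succ_top hm, ih (by omega)]
      have hk := hkey m hm (by omega)
      have e1 : m + 1 - 1 = m := by omega
      rw [e1]
      linear_combination hk
  have L3 : ∀ m, 1 ≤ m → m ≤ r + 1 →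
      ∑ i ∈ Finset.Ico 1 m, (s i - s (i + 1)) * (T - B i)
        = s 1 * T - s m * (T - B (m - 1)) - G (m - 1) := by
    intro m hm1
    induction m, hm1 using Nat.le_induction with
    | base => intro _; simp [hB0, hG0]
    | succ m hm ih =>
      intro hmr
      rw [Finset.sum_Ico_succ_top hm, ih (by omega)]
      have hk := hkey m hm (by omega)
      have e1 : m + 1 - 1 = m := by omega
      rw [e1]
      linear_combination (-1 : ℝ) * hk
  have hsr : s (r + 1) * (T - B r) = - G r := by
    have hk := hkey (r + 1) (by omega) (le_refl _)
    have e1 : r + 1 - 1 = r := by omega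
    rw [e1, hBtop (r+1) (by omega), hGtop] at hk
    linarith
  refine ⟨b, hbmono, hbmem, a, ha, ?_⟩
  intro S hS
  by_cases h1 : S = ∅
  · subst h1
    rw [Finset.sum_empty, hg0]
    symm
    apply Finset.sum_eq_zero
    intro i _
    have hb := hQpos _ (hbmem i)
    rw [mul_zero, min_eq_left]
    · ring
    · rw [Finset.sdiff_empty]
      exact mul_nonneg hb.1.le (Finset.sum_nonneg fun v hv => (hγ v hv).le)
  by_cases h2 : S = e
  · subst h2
    rw [← hTdef, hgT]
    symm
    apply Finset.sum_eq_zero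
    intro i _
    have hb := hQpos _ (hbmem i)
    rw [Finset.sdiff_self, Finset.sum_empty, mul_zero, min_eq_right]
    · ring
    · exact mul_nonneg (by linarith [hb.2]) hT0.le
  -- the main case
  have hmem : (∑ v ∈ S, γ v) ∈ Q := hmemQ S hS h1 h2
  have hrange : (∑ v ∈ S, γ v) ∈ Set.range (Q.orderEmbOfFin hrdef.symm) := by
    rw [Finset.range_orderEmbOfFin]
    exact hmem
  obtain ⟨j, hj⟩ := hrange
  set J : ℕ := (j : ℕ) + 1 with hJdef
  have hjlt : (j : ℕ) < r := j.isLt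
  have hJ1 : 1 ≤ J := by omega
  have hJr : J ≤ r := by omega
  have hBJ : B J = ∑ v ∈ S, γ v := by rw [hJdef, hBb j]; exact hj
  have hsd : ∑ v ∈ e \ S, γ v = T - B J := by
    rw [Finset.sum_sdiff_eq_sub hS, hBJ]
  have hGJ : g (∑ v ∈ S, γ v) = G J := by simp only [hGdef]; rw [hBJ]
  rw [hGJ, hsd, ← hBJ]
  have hterm : ∀ i : Fin r, a i * min ((T - b i) * B J) (b i * (T - B J))
      = ((s ((i:ℕ)+1) - s ((i:ℕ)+1+1)) * min ((T - B ((i:ℕ)+1)) * B J)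
          (B ((i:ℕ)+1) * (T - B J))) / T := by
    intro i
    rw [← hBb i]
    simp only [hadef]
    have e2 : (i:ℕ) + 1 + 1 = (i:ℕ) + 2 := by omega
    rw [e2]
    ring
  have hIco : ∑ i : Fin r, a i * min ((T - b i) * B J) (b i * (T - B J))
      = (∑ i ∈ Finset.Ico 1 (r+1),
          (s i - s (i+1)) * min ((T - B i) * B J) (B i * (T - B J))) / T := by
    calc ∑ i : Fin r, a i * min ((T - b i) * B J) (b i * (T - B J))
        = ∑ i : Fin r, ((s ((i:ℕ)+1) - s ((i:ℕ)+1+1)) * min ((T - B ((i:ℕ)+1)) * B J)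
            (B ((i:ℕ)+1) * (T - B J))) / T :=
          Finset.sum_congr rfl (fun i _ => hterm i)
      _ = ∑ k ∈ Finset.range r, ((s (k+1) - s (k+1+1)) * min ((T - B (k+1)) * B J)
            (B (k+1) * (T - B J))) / T :=
          Fin.sum_univ_eq_sum_range (fun k => ((s (k+1) - s (k+1+1)) *
            min ((T - B (k+1)) * B J) (B (k+1) * (T - B J))) / T) r
      _ = ∑ i ∈ Finset.Ico 1 (r+1),
            ((s i - s (i+1)) * min ((T - B i) * B J) (B i * (T - B J))) / T := by
          rw [Finset.sum_Ico_eq_sum_range]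
          simp only [Nat.add_sub_cancel]
          apply Finset.sum_congr rfl
          intro k _
          rw [add_comm 1 k]
      _ = (∑ i ∈ Finset.Ico 1 (r+1),
            (s i - s (i+1)) * min ((T - B i) * B J) (B i * (T - B J))) / T :=
          (Finset.sum_div _ _ _).symm
  rw [hIco, eq_div_iff hT0.ne']
  have hkJ := hkey J hJ1 (by omega)
  have hleft : ∑ i ∈ Finset.Ico 1 J,
      (s i - s (i+1)) * min ((T - B i) * B J) (B i * (T - B J))
      = (T - B J) * (G (J-1) - s J * B (J-1)) := by
    rw [← L2 J hJ1 (by omega), Finset.mul_sum]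
    apply Finset.sum_congr rfl
    intro i hi
    rw [Finset.mem_Ico] at hi
    have hle : B i ≤ B J := hBle i J (by omega) (by omega)
    rw [min_eq_right (by nlinarith [mul_le_mul_of_nonneg_left hle hT0.le])]
    ring
  have hright : ∑ i ∈ Finset.Ico J (r+1),
      (s i - s (i+1)) * min ((T - B i) * B J) (B i * (T - B J))
      = B J * (s J * (T - B (J-1)) + G (J-1)) := by
    have htail : ∑ i ∈ Finset.Ico J (r+1), (s i - s (i+1)) * (T - B i)
        = s J * (T - B (J-1)) + G (J-1) := by
      have hfull := L3 (r+1) (by omega) (le_refl _)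
      have hpart := L3 J hJ1 (by omega)
      have e1 : r + 1 - 1 = r := by omega
      rw [e1] at hfull
      have hsplit2 := Finset.sum_Ico_consecutive
        (fun i => (s i - s (i+1)) * (T - B i))
        (show 1 ≤ J by omega) (show J ≤ r + 1 by omega)
      have hx : ∑ i ∈ Finset.Ico J (r+1), (s i - s (i+1)) * (T - B i)
          = (s 1 * T - s (r+1) * (T - B r) - G r)
            - (s 1 * T - s J * (T - B (J-1)) - G (J-1)) := by
        rw [← hfull, ← hpart, ← hsplit2]; ring
      rw [hx]
      linarith [hsr]
    rw [← htail, Finset.mul_sum]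
    apply Finset.sum_congr rfl
    intro i hi
    rw [Finset.mem_Ico] at hi
    have hle : B J ≤ B i := hBle J i (by omega) (by omega)
    rw [min_eq_left (by nlinarith [mul_le_mul_of_nonneg_left hle hT0.le])]
    ring
  rw [← Finset.sum_Ico_consecutive
    (fun i => (s i - s (i+1)) * min ((T - B i) * B J) (B i * (T - B J)))
    (show 1 ≤ J by omega) (show J ≤ r + 1 by omega), hleft, hright]
  linear_combination (-T) * hkJ
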